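/- Let E ⊂ ℝⁿ be a closed non-empty set with dist(·,E)^{-α} ∈ A_p for some α > 0 and 1 < p < ∞. Then with σ = p/α there is a constant C₀ > 0 depending on n, α, p and the A_p constant of dist(·,E)^{-α}, such that 𝓛_{Q₀}(t) ≤ (C₀/t^σ) 𝓢_{Q₀}(t) for every cube Q₀ intersecting E and every t ∈ (0,1). -/

import Mathlib

open MeasureTheory Set
open scoped Classical

/-- A half-open axis-parallel cube in `ℝⁿ`. -/
structure Cube (n : ℕ) where
  a : Fin n → ℝ
  l : ℝ
  l_pos : 0 < l

namespace Cube

/-- The set of points of the cube. -/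
def carrier {n : ℕ} (Q : Cube n) : Set (Fin n → ℝ) :=
  {x | ∀ i, Q.a i ≤ x i ∧ x i < Q.a i + Q.l}

/-- The volume (Lebesgue measure) of the cube. -/
def vol {n : ℕ} (Q : Cube n) : ℝ := Q.l ^ n

end Cube

/-- `Q` is a dyadic subcube of `Q₀` of generation `j`. -/
def IsDyadic {n : ℕ} (Q₀ Q : Cube n) (j : ℕ) : Prop :=
  Q.l = Q₀.l / 2 ^ j ∧
    ∃ k : Fin n → ℕ, (∀ i, k i < 2 ^ j) ∧ ∀ i, Q.a i = Q₀.a i + (k i : ℝ) * Q₀.l / 2 ^ j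

/-- The dyadic system of subcubes of `Q₀`. -/
def dyadicFamily {n : ℕ} (Q₀ : Cube n) : Set (Cube n) := {Q | ∃ j, IsDyadic Q₀ Q j}

/-- `P` is the dyadic parent of `Q` inside the dyadic system of `Q₀`. -/
def IsParent {n : ℕ} (Q₀ P Q : Cube n) : Prop :=
  ∃ j : ℕ, IsDyadic Q₀ Q (j + 1) ∧ IsDyadic Q₀ P j ∧ Q.carrier ⊆ P.carrier

/-- The family `D_E(Q₀)` of maximal dyadic subcubes of `Q₀` avoiding `E` whose dyadic
parent meets `E`. -/
def DE {n : ℕ} (E : Set (Fin n → ℝ)) (Q₀ : Cube n) : Set (Cube n) :=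
  {Q | Q ∈ dyadicFamily Q₀ ∧ Q.carrier ∩ E = ∅ ∧
    ∀ P : Cube n, IsParent Q₀ P Q → (P.carrier ∩ E).Nonempty}

/-- `Σ_{Q ∈ D_E(Q₀), l(Q) ≥ L} |Q|`. -/
noncomputable def sumGE {n : ℕ} (E : Set (Fin n → ℝ)) (Q₀ : Cube n) (L : ℝ) : ℝ :=
  ∑' Q : {Q : Cube n // Q ∈ DE E Q₀ ∧ L ≤ Q.l}, (Q : Cube n).vol

/-- `Σ_{Q ∈ D_E(Q₀), l(Q) ≤ L} |Q|`. -/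
noncomputable def sumLE {n : ℕ} (E : Set (Fin n → ℝ)) (Q₀ : Cube n) (L : ℝ) : ℝ :=
  ∑' Q : {Q : Cube n // Q ∈ DE E Q₀ ∧ Q.l ≤ L}, (Q : Cube n).vol

/-- `Σ_{Q ∈ D_E(Q₀), l(Q) < L} |Q|`. -/
noncomputable def sumLT {n : ℕ} (E : Set (Fin n → ℝ)) (Q₀ : Cube n) (L : ℝ) : ℝ :=
  ∑' Q : {Q : Cube n // Q ∈ DE E Q₀ ∧ Q.l < L}, (Q : Cube n).vol

/-- `Σ_{Q ∈ D_E(Q₀), l(Q) > L} |Q|`. -/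
noncomputable def sumGT {n : ℕ} (E : Set (Fin n → ℝ)) (Q₀ : Cube n) (L : ℝ) : ℝ :=
  ∑' Q : {Q : Cube n // Q ∈ DE E Q₀ ∧ L < Q.l}, (Q : Cube n).vol

/-- The set `𝓛(t,Q₀,E)`. -/
def Lset {n : ℕ} (t : ℝ) (Q₀ : Cube n) (E : Set (Fin n → ℝ)) : Set ℝ :=
  {L | 0 ≤ L ∧ t * Q₀.vol ≤ sumGE E Q₀ L}

/-- The set `𝓢(t,Q₀,E)`. -/
def Sset {n : ℕ} (t : ℝ) (Q₀ : Cube n) (E : Set (Fin n → ℝ)) : Set ℝ :=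
  {L | 0 ≤ L ∧ t * Q₀.vol ≤ sumLE E Q₀ L}

/-- `𝓛_{Q₀}(t) = sup 𝓛(t,Q₀,E)` (the max, when attained). -/
noncomputable def Lfun {n : ℕ} (E : Set (Fin n → ℝ)) (Q₀ : Cube n) (t : ℝ) : ℝ :=
  sSup (Lset t Q₀ E)

/-- `𝓢_{Q₀}(t) = inf 𝓢(t,Q₀,E)` (the min, when attained). -/
noncomputable def Sfun {n : ℕ} (E : Set (Fin n → ℝ)) (Q₀ : Cube n) (t : ℝ) : ℝ :=
  sInf (Sset t Q₀ E)

/-- The Muckenhoupt class `A_p` (for `p = 1` the `A₁` condition, for `p > 1` the usual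
`A_p` condition), with cubes as the testing family. -/
def IsAp {n : ℕ} (p : ℝ) (w : (Fin n → ℝ) → ℝ) : Prop :=
  (∀ᵐ x, 0 < w x) ∧ LocallyIntegrable w volume ∧
    ∃ C : ℝ, 0 < C ∧ ∀ Q : Cube n,
      if p = 1 then
        (∫ x in Q.carrier, w x) / Q.vol ≤ C * essInf w (volume.restrict Q.carrier)
      else
        ((∫ x in Q.carrier, w x) / Q.vol) *
          ((∫ x in Q.carrier, w x ^ (-1 / (p - 1))) / Q.vol) ^ (p - 1) ≤ C


section Aux

variable {n : ℕ}

lemma Cube.ext' {Q Q' : Cube n} (ha : Q.a = Q'.a) (hl : Q.l = Q'.l) : Q = Q' := by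
  cases Q; cases Q'; simp_all

lemma Cube.carrier_eq_pi (Q : Cube n) :
    Q.carrier = Set.pi Set.univ (fun i => Set.Ico (Q.a i) (Q.a i + Q.l)) := by
  ext x; simp [Cube.carrier, Set.mem_pi, Set.mem_Ico]

lemma Cube.measurable (Q : Cube n) : MeasurableSet Q.carrier := by
  rw [Cube.carrier_eq_pi]
  exact MeasurableSet.univ_pi fun i => measurableSet_Ico

lemma Cube.volume_carrier (Q : Cube n) : volume Q.carrier = ENNReal.ofReal Q.vol := by
  rw [Cube.carrier_eq_pi, volume_pi_pi]
  simp only [Real.volume_Ico, add_sub_cancel_left]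
  rw [Finset.prod_const, ← ENNReal.ofReal_pow Q.l_pos.le]
  simp [Cube.vol]

lemma Cube.vol_pos (Q : Cube n) : 0 < Q.vol := pow_pos Q.l_pos n

lemma Cube.nonempty (Q : Cube n) : Q.carrier.Nonempty :=
  ⟨Q.a, fun i => ⟨le_refl _, by linarith [Q.l_pos]⟩⟩

lemma Cube.carrier_subset_Icc (Q : Cube n) :
    Q.carrier ⊆ Set.Icc Q.a (fun i => Q.a i + Q.l) := by
  intro x hx
  constructor <;> intro i
  · exact (hx i).1
  · exact (hx i).2.le

lemma Cube.integrableOn_carrier {f : (Fin n → ℝ) → ℝ} (hf : LocallyIntegrable f volume)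
    (Q : Cube n) : IntegrableOn f Q.carrier := by
  exact (hf.integrableOn_isCompact isCompact_Icc).mono_set Q.carrier_subset_Icc

lemma IsDyadic.l_eq {Q₀ Q : Cube n} {j : ℕ} (h : IsDyadic Q₀ Q j) : Q.l = Q₀.l / 2 ^ j := h.1

lemma IsDyadic.l_le {Q₀ Q : Cube n} {j : ℕ} (h : IsDyadic Q₀ Q j) : Q.l ≤ Q₀.l := by
  rw [h.1]
  apply div_le_self Q₀.l_pos.le
  exact one_le_pow₀ one_le_two

lemma IsDyadic.subset {Q₀ Q : Cube n} {j : ℕ} (h : IsDyadic Q₀ Q j) :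
    Q.carrier ⊆ Q₀.carrier := by
  obtain ⟨hl, k, hk, ha⟩ := h
  intro x hx i
  have h1 := (hx i).1
  have h2 := (hx i).2
  rw [ha i] at h1 h2
  rw [hl] at h2
  have hkp : (0:ℝ) ≤ (k i : ℝ) := Nat.cast_nonneg _
  have hp2 : (0:ℝ) < 2 ^ j := by positivity
  have hl0 := Q₀.l_pos
  have hki : (k i : ℝ) + 1 ≤ 2 ^ j := by
    have : (k i : ℝ) + 1 ≤ ((2:ℕ) ^ j : ℕ) := by exact_mod_cast hk i
    simpa using this
  constructor
  · have hnn : (0:ℝ) ≤ (k i : ℝ) * Q₀.l / 2 ^ j := by positivity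
    linarith
  · have : (k i : ℝ) * Q₀.l / 2 ^ j + Q₀.l / 2 ^ j ≤ Q₀.l := by
      rw [← add_div, div_le_iff₀ hp2]
      nlinarith
    linarith

end Aux
section Aux2

variable {n : ℕ}

/-- Nesting of dyadic cubes: coarser cube contains finer one if they intersect. -/
lemma dyadic_nest {Q₀ Q Q' : Cube n} {j j' : ℕ} (hj : j ≤ j')
    (hQ : IsDyadic Q₀ Q j) (hQ' : IsDyadic Q₀ Q' j')
    (hx : (Q.carrier ∩ Q'.carrier).Nonempty) :
    Q'.carrier ⊆ Q.carrier ∧ (j = j' → Q = Q') := by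
  obtain ⟨hl, k, hk, ha⟩ := hQ
  obtain ⟨hl', k', hk', ha'⟩ := hQ'
  obtain ⟨x, hxQ, hxQ'⟩ := hx
  have hl0 := Q₀.l_pos
  have hp2 : (0:ℝ) < 2 ^ j := by positivity
  have hp2' : (0:ℝ) < 2 ^ j' := by positivity
  set m : ℕ := 2 ^ (j' - j) with hm
  have hmpos : 0 < m := Nat.pow_pos (by norm_num)
  have hmm : (2:ℝ) ^ j' = 2 ^ j * (m:ℝ) := by
    rw [hm]
    push_cast
    rw [← pow_add]
    congr 1
    omega
  have h0 : (0:ℝ) < Q₀.l * 2 ^ j := by positivity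
  have h0' : (0:ℝ) < Q₀.l * 2 ^ j' := by positivity
  -- coordinatewise key inequalities
  have key : ∀ i, k i * m ≤ k' i ∧ k' i < (k i + 1) * m := by
    intro i
    have h1 := (hxQ i).1
    have h2 := (hxQ i).2
    have h1' := (hxQ' i).1
    have h2' := (hxQ' i).2
    rw [ha i] at h1 h2
    rw [ha' i] at h1' h2'
    rw [hl] at h2
    rw [hl'] at h2'
    constructor
    · have hr : (k i : ℝ) * Q₀.l / 2 ^ j < ((k' i : ℝ) + 1) * Q₀.l / 2 ^ j' := by
        have heq : (k' i : ℝ) * Q₀.l / 2 ^ j' + Q₀.l / 2 ^ j'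
            = ((k' i : ℝ) + 1) * Q₀.l / 2 ^ j' := by ring
        linarith
      rw [div_lt_div_iff₀ hp2 hp2', hmm] at hr
      have hreal : ((k i * m : ℕ) : ℝ) < ((k' i + 1 : ℕ) : ℝ) := by
        refine (mul_lt_mul_iff_left₀ h0).mp ?_
        push_cast
        linear_combination hr
      have := Nat.cast_lt.mp hreal
      omega
    · have hr : (k' i : ℝ) * Q₀.l / 2 ^ j' < ((k i : ℝ) + 1) * Q₀.l / 2 ^ j := by
        have heq : (k i : ℝ) * Q₀.l / 2 ^ j + Q₀.l / 2 ^ j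
            = ((k i : ℝ) + 1) * Q₀.l / 2 ^ j := by ring
        linarith
      rw [div_lt_div_iff₀ hp2' hp2, hmm] at hr
      have hreal : ((k' i : ℕ) : ℝ) < (((k i + 1) * m : ℕ) : ℝ) := by
        refine (mul_lt_mul_iff_left₀ h0).mp ?_
        push_cast
        linear_combination hr
      exact Nat.cast_lt.mp hreal
  constructor
  · intro y hy i
    have hy1 := (hy i).1
    have hy2 := (hy i).2
    rw [ha' i] at hy1 hy2
    rw [hl'] at hy2
    have hk1 : ((k i : ℝ)) * m ≤ (k' i : ℝ) := by
      have := (key i).1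
      have : ((k i * m : ℕ) : ℝ) ≤ ((k' i : ℕ) : ℝ) := Nat.cast_le.mpr this
      push_cast at this
      linarith
    have hk2 : ((k' i : ℝ) + 1) ≤ ((k i : ℝ) + 1) * m := by
      have h2 := (key i).2
      have : ((k' i + 1 : ℕ) : ℝ) ≤ (((k i + 1) * m : ℕ) : ℝ) := Nat.cast_le.mpr (by omega)
      push_cast at this
      linarith
    rw [ha i, hl]
    constructor
    · have hle : (k i : ℝ) * Q₀.l / 2 ^ j ≤ (k' i : ℝ) * Q₀.l / 2 ^ j' := by
        rw [div_le_div_iff₀ hp2 hp2', hmm]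
        have := mul_le_mul_of_nonneg_right hk1 h0.le
        linear_combination this
      linarith
    · have hle : ((k' i : ℝ) + 1) * Q₀.l / 2 ^ j' ≤ ((k i : ℝ) + 1) * Q₀.l / 2 ^ j := by
        rw [div_le_div_iff₀ hp2' hp2, hmm]
        have := mul_le_mul_of_nonneg_right hk2 h0.le
        linear_combination this
      have heq : (k' i : ℝ) * Q₀.l / 2 ^ j' + Q₀.l / 2 ^ j' = ((k' i : ℝ) + 1) * Q₀.l / 2 ^ j' := by
        ring
      have heq2 : (k i : ℝ) * Q₀.l / 2 ^ j + Q₀.l / 2 ^ j = ((k i : ℝ) + 1) * Q₀.l / 2 ^ j := by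
        ring
      linarith
  · intro hjj
    subst hjj
    have hm1 : m = 1 := by simp [hm]
    apply Cube.ext'
    · funext i
      rw [ha i, ha' i]
      have h1 := (key i).1
      have h2 := (key i).2
      rw [hm1] at h1 h2
      have : k i = k' i := by omega
      rw [this]
    · rw [hl, hl']

/-- Every dyadic cube of positive generation has a parent. -/
lemma parent_exists {Q₀ Q : Cube n} {j : ℕ} (h : IsDyadic Q₀ Q (j + 1)) :
    ∃ P : Cube n, IsParent Q₀ P Q := by
  obtain ⟨hl, k, hk, ha⟩ := h
  have hl0 := Q₀.l_pos
  have hsucc : ∀ i, k i / 2 < 2 ^ j := by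
    intro i
    have h1 := hk i
    have h2 : 2 ^ (j + 1) = 2 * 2 ^ j := by rw [pow_succ]; ring
    omega
  refine ⟨⟨fun i => Q₀.a i + ((k i / 2 : ℕ) : ℝ) * Q₀.l / 2 ^ j, Q₀.l / 2 ^ j, by positivity⟩,
    j, ⟨hl, k, hk, ha⟩, ⟨rfl, fun i => k i / 2, fun i => hsucc i, fun i => rfl⟩, ?_⟩
  intro y hy i
  have hy1 := (hy i).1
  have hy2 := (hy i).2
  rw [ha i] at hy1 hy2
  rw [hl] at hy2
  have hp2 : (0:ℝ) < 2 ^ j := by positivity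
  have h0 : (0:ℝ) < Q₀.l * 2 ^ j := by positivity
  simp only
  have hdiv1 : ((k i / 2 : ℕ) : ℝ) * 2 ≤ (k i : ℝ) := by
    have : ((k i / 2 * 2 : ℕ) : ℝ) ≤ ((k i : ℕ) : ℝ) := Nat.cast_le.mpr (by omega)
    push_cast at this
    linarith
  have hdiv2 : (k i : ℝ) + 1 ≤ (((k i / 2 : ℕ) : ℝ) + 1) * 2 := by
    have : ((k i + 1 : ℕ) : ℝ) ≤ (((k i / 2 + 1) * 2 : ℕ) : ℝ) := Nat.cast_le.mpr (by omega)
    push_cast at this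
    linarith
  have h2j : (2:ℝ) ^ (j+1) = 2 ^ j * 2 := by ring
  constructor
  · have hle : ((k i / 2 : ℕ) : ℝ) * Q₀.l / 2 ^ j ≤ (k i : ℝ) * Q₀.l / 2 ^ (j+1) := by
      rw [div_le_div_iff₀ hp2 (by positivity), h2j]
      have := mul_le_mul_of_nonneg_right hdiv1 (mul_pos hl0 hp2).le
      linear_combination this
    linarith
  · have hle : ((k i : ℝ) + 1) * Q₀.l / 2 ^ (j+1) ≤ (((k i / 2 : ℕ) : ℝ) + 1) * Q₀.l / 2 ^ j := by
      rw [div_le_div_iff₀ (by positivity) hp2, h2j]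
      have := mul_le_mul_of_nonneg_right hdiv2 (mul_pos hl0 hp2).le
      linear_combination this
    have heq : (k i : ℝ) * Q₀.l / 2 ^ (j+1) + Q₀.l / 2 ^ (j+1)
        = ((k i : ℝ) + 1) * Q₀.l / 2 ^ (j+1) := by ring
    have heq2 : ((k i / 2 : ℕ) : ℝ) * Q₀.l / 2 ^ j + Q₀.l / 2 ^ j
        = (((k i / 2 : ℕ) : ℝ) + 1) * Q₀.l / 2 ^ j := by ring
    linarith

end Aux2
section Aux3

variable {n : ℕ} {E : Set (Fin n → ℝ)} {Q₀ : Cube n}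

lemma IsDyadic.gen_unique {Q : Cube n} {j j' : ℕ} (h : IsDyadic Q₀ Q j)
    (h' : IsDyadic Q₀ Q j') : j = j' := by
  have h1 := h.1
  have h2 := h'.1
  rw [h1] at h2
  have hl0 := Q₀.l_pos
  field_simp at h2
  exact (Nat.pow_right_injective le_rfl (by exact_mod_cast h2)).symm

lemma DE.l_le {Q : Cube n} (h : Q ∈ DE E Q₀) : Q.l ≤ Q₀.l := by
  obtain ⟨j, hj⟩ := h.1; exact hj.l_le

lemma DE.subset {Q : Cube n} (h : Q ∈ DE E Q₀) : Q.carrier ⊆ Q₀.carrier := by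
  obtain ⟨j, hj⟩ := h.1; exact hj.subset

/-- Cubes in `DE` are pairwise disjoint. -/
lemma DE.disjoint {Q Q' : Cube n} (h : Q ∈ DE E Q₀) (h' : Q' ∈ DE E Q₀) (hne : Q ≠ Q') :
    Disjoint Q.carrier Q'.carrier := by
  rw [Set.disjoint_iff_inter_eq_empty]
  by_contra hc
  have hx : (Q.carrier ∩ Q'.carrier).Nonempty := Set.nonempty_iff_ne_empty.mpr hc
  obtain ⟨j, hj⟩ := h.1
  obtain ⟨j', hj'⟩ := h'.1
  have main : ∀ (A B : Cube n) (ja jb : ℕ), ja ≤ jb → A ∈ DE E Q₀ → B ∈ DE E Q₀ →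
      IsDyadic Q₀ A ja → IsDyadic Q₀ B jb → (A.carrier ∩ B.carrier).Nonempty → A ≠ B → False := by
    intro A B ja jb hab hA hB hda hdb hxab hne
    obtain ⟨hsub, heq⟩ := dyadic_nest hab hda hdb hxab
    rcases Nat.lt_or_ge ja jb with hlt | hge
    · obtain ⟨jb', rfl⟩ : ∃ jb', jb = jb' + 1 := ⟨jb - 1, by omega⟩
      obtain ⟨P, hP⟩ := parent_exists hdb
      have hPE : (P.carrier ∩ E).Nonempty := hB.2.2 P hP
      obtain ⟨w, hdb2, hdP, hBP⟩ := hP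
      have hw : w + 1 = jb' + 1 := hdb2.gen_unique hdb
      have hPsub : P.carrier ⊆ A.carrier := by
        have hx2 : (A.carrier ∩ P.carrier).Nonempty := by
          obtain ⟨z, hz⟩ := B.nonempty
          exact ⟨z, hsub hz, hBP hz⟩
        exact (dyadic_nest (by omega) hda hdP hx2).1
      obtain ⟨y, hy1, hy2⟩ := hPE
      have hAE := hA.2.1
      rw [Set.eq_empty_iff_forall_notMem] at hAE
      exact hAE y ⟨hPsub hy1, hy2⟩
    · have : ja = jb := by omega
      exact hne (heq this)
  rcases le_total j j' with hle | hle
  · exact main Q Q' j j' hle h h' hj hj' hx hne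
  · exact main Q' Q j' j hle h' h hj' hj (by rwa [Set.inter_comm] at hx) hne.symm

/-- `DE` is countable. -/
lemma DE.countable : (DE E Q₀).Countable := by
  have hsub : dyadicFamily Q₀ ⊆ ⋃ (jk : ℕ × (Fin n → ℕ)),
      {⟨fun i => Q₀.a i + (jk.2 i : ℝ) * Q₀.l / 2 ^ jk.1, Q₀.l / 2 ^ jk.1,
        div_pos Q₀.l_pos (by positivity)⟩} := by
    rintro Q ⟨j, hl, k, hk, ha⟩
    refine Set.mem_iUnion.mpr ⟨⟨j, k⟩, ?_⟩
    simp only [Set.mem_singleton_iff]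
    exact Cube.ext' (funext fun i => ha i) hl
  have hcf : (dyadicFamily Q₀).Countable :=
    Set.Countable.mono hsub (Set.countable_iUnion fun jk => Set.countable_singleton _)
  exact hcf.mono fun Q hQ => hQ.1

/-- On a `DE` cube, the distance to `E` is at most `2 l(Q)` (sup metric). -/
lemma DE.dist_le {Q : Cube n} (hQ : Q ∈ DE E Q₀) (hQ₀ : (Q₀.carrier ∩ E).Nonempty)
    {x : Fin n → ℝ} (hx : x ∈ Q.carrier) : Metric.infDist x E ≤ 2 * Q.l := by
  obtain ⟨j, hj⟩ := hQ.1
  rcases j with _ | j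
  · exfalso
    obtain ⟨hl, k, hk, ha⟩ := hj
    have hQeq : Q = Q₀ := by
      apply Cube.ext'
      · funext i
        have : k i = 0 := by have := hk i; omega
        rw [ha i, this]; simp
      · simpa using hl
    obtain ⟨z, hz1, hz2⟩ := hQ₀
    have hQE := hQ.2.1
    rw [Set.eq_empty_iff_forall_notMem] at hQE
    exact hQE z ⟨hQeq ▸ hz1, hz2⟩
  · obtain ⟨P, hP⟩ := parent_exists hj
    have hPE : (P.carrier ∩ E).Nonempty := hQ.2.2 P hP
    obtain ⟨w, hd2, hdP, hQP⟩ := hP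
    obtain ⟨y, hy1, hy2⟩ := hPE
    have hdist : dist x y ≤ 2 * Q.l := by
      rw [dist_pi_le_iff (by linarith [Q.l_pos])]
      intro i
      have hx1 := (hQP hx i).1
      have hx2 := (hQP hx i).2
      have hy1' := (hy1 i).1
      have hy2' := (hy1 i).2
      have hPl : P.l = 2 * Q.l := by
        rw [hdP.l_eq, hd2.l_eq, pow_succ]
        have : (0:ℝ) < 2 ^ w := by positivity
        field_simp
      rw [Real.dist_eq, abs_le]
      constructor <;> nlinarith [P.l_pos]
    calc Metric.infDist x E ≤ dist x y := Metric.infDist_le_dist_of_mem hy2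
      _ ≤ 2 * Q.l := hdist

/-- On the middle part of an `E`-free cube, the distance to `E` is at least `l/4`. -/
lemma middle_dist {Q : Cube n} (hfree : Q.carrier ∩ E = ∅) (hEne : E.Nonempty)
    {x : Fin n → ℝ} (hx : ∀ i, Q.a i + Q.l / 4 ≤ x i ∧ x i ≤ Q.a i + 3 * Q.l / 4) :
    Q.l / 4 ≤ Metric.infDist x E := by
  by_contra hc
  push_neg at hc
  obtain ⟨y, hyE, hyd⟩ := (Metric.infDist_lt_iff hEne).mp hc
  have hymem : y ∈ Q.carrier := by
    intro i
    have hdi : dist (x i) (y i) ≤ dist x y := dist_le_pi_dist x y i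
    have : |x i - y i| < Q.l / 4 := by
      rw [← Real.dist_eq]
      linarith
    have h1 := (hx i).1
    have h2 := (hx i).2
    rw [abs_lt] at this
    constructor
    · linarith
    · linarith
  have hQE := hfree
  rw [Set.eq_empty_iff_forall_notMem] at hQE
  exact hQE y ⟨hymem, hyE⟩

end Aux3
section Aux4

variable {n : ℕ} {E : Set (Fin n → ℝ)} {Q₀ : Cube n}

instance DE.sub_countable (P : Cube n → Prop) :
    Countable {Q : Cube n // Q ∈ DE E Q₀ ∧ P Q} := by
  have hc : ({Q : Cube n | Q ∈ DE E Q₀ ∧ P Q}).Countable :=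
    DE.countable.mono fun Q hQ => hQ.1
  exact hc.to_subtype

lemma DE.sub_pairwise (P : Cube n → Prop) :
    Pairwise (Function.onFun Disjoint fun Q : {Q : Cube n // Q ∈ DE E Q₀ ∧ P Q} => Q.1.carrier) := by
  intro a b hab
  exact DE.disjoint a.2.1 b.2.1 fun hval => hab (Subtype.ext hval)

lemma DE.sub_summable (P : Cube n → Prop) :
    Summable (fun Q : {Q : Cube n // Q ∈ DE E Q₀ ∧ P Q} => Q.1.vol) := by
  have hvol : ∀ Q : {Q : Cube n // Q ∈ DE E Q₀ ∧ P Q},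
      Q.1.vol = (volume Q.1.carrier).toReal := by
    intro Q
    rw [Cube.volume_carrier, ENNReal.toReal_ofReal Q.1.vol_pos.le]
  have h1 : Summable (fun Q : {Q : Cube n // Q ∈ DE E Q₀ ∧ P Q} =>
      (volume Q.1.carrier).toReal) := by
    apply ENNReal.summable_toReal
    rw [← measure_iUnion (DE.sub_pairwise P) (fun Q => Q.1.measurable)]
    refine ne_top_of_le_ne_top ?_ (measure_mono (Set.iUnion_subset fun Q => DE.subset Q.2.1))
    rw [Cube.volume_carrier]
    exact ENNReal.ofReal_ne_top
  exact h1.congr fun Q => (hvol Q).symm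

lemma DE.tsum_mono {P P' : Cube n → Prop} (h : ∀ Q, Q ∈ DE E Q₀ → P Q → P' Q) :
    (∑' Q : {Q : Cube n // Q ∈ DE E Q₀ ∧ P Q}, Q.1.vol)
      ≤ ∑' Q : {Q : Cube n // Q ∈ DE E Q₀ ∧ P' Q}, Q.1.vol := by
  apply (DE.sub_summable P).tsum_le_tsum_of_inj (fun Q => ⟨Q.1, Q.2.1, h _ Q.2.1 Q.2.2⟩)
  · intro a b hab
    simp only [Subtype.mk.injEq] at hab
    exact Subtype.ext hab
  · intro c _
    exact c.1.vol_pos.le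
  · intro a
    exact le_refl _
  · exact DE.sub_summable P'

lemma DE.integral_lower (P : Cube n → Prop) {f : (Fin n → ℝ) → ℝ} {c : ℝ}
    (hf_int : IntegrableOn f Q₀.carrier) (hf0 : ∀ x, 0 ≤ f x) (hc : 0 ≤ c)
    (hbound : ∀ Q, Q ∈ DE E Q₀ → P Q → c * Q.vol ≤ ∫ x in Q.carrier, f x) :
    c * (∑' Q : {Q : Cube n // Q ∈ DE E Q₀ ∧ P Q}, Q.1.vol) ≤ ∫ x in Q₀.carrier, f x := by
  set S := {Q : Cube n // Q ∈ DE E Q₀ ∧ P Q}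
  have hU : (⋃ Q : S, Q.1.carrier) ⊆ Q₀.carrier :=
    Set.iUnion_subset fun Q => DE.subset Q.2.1
  have hIU : IntegrableOn f (⋃ Q : S, Q.1.carrier) := hf_int.mono_set hU
  have hsum := hasSum_integral_iUnion (fun Q : S => Q.1.measurable)
    (DE.sub_pairwise P) hIU
  have hsummable : Summable (fun Q : S => ∫ x in Q.1.carrier, f x) := hsum.summable
  have h1 : ∀ Q : S, c * Q.1.vol ≤ ∫ x in Q.1.carrier, f x :=
    fun Q => hbound _ Q.2.1 Q.2.2
  calc c * (∑' Q : S, Q.1.vol) = ∑' Q : S, c * Q.1.vol := by rw [tsum_mul_left]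
    _ ≤ ∑' Q : S, ∫ x in Q.1.carrier, f x := by
        apply Summable.tsum_le_tsum h1 _ hsummable
        exact (DE.sub_summable P).mul_left c
    _ = ∫ x in (⋃ Q : S, Q.1.carrier), f x := hsum.tsum_eq
    _ ≤ ∫ x in Q₀.carrier, f x := by
        apply setIntegral_mono_set hf_int
        · exact Filter.Eventually.of_forall hf0
        · exact hU.eventuallyLE

end Aux4
section Aux5

variable {n : ℕ} {E : Set (Fin n → ℝ)} {Q₀ : Cube n}

/-- Lower bound for the integral of `dist^{-α}` over a small-cubes subfamily. -/
lemma claimS (hE : IsClosed E) (hne : E.Nonempty) {α : ℝ} (hα : 0 < α)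
    (hloc : LocallyIntegrable (fun x => Metric.infDist x E ^ (-α)) volume)
    (hQ₀ : (Q₀.carrier ∩ E).Nonempty) {t S' : ℝ} (ht : 0 < t)
    (hS0 : 0 ≤ S') (hSsum : t * Q₀.vol ≤ sumLE E Q₀ S') :
    (2 * S') ^ (-α) * t ≤ (∫ x in Q₀.carrier, Metric.infDist x E ^ (-α)) / Q₀.vol := by
  set w : (Fin n → ℝ) → ℝ := fun x => Metric.infDist x E ^ (-α) with hw
  have hS' : 0 < S' := by
    rcases lt_or_eq_of_le hS0 with h | h
    · exact h
    · exfalso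
      have hempty : IsEmpty {Q : Cube n // Q ∈ DE E Q₀ ∧ Q.l ≤ S'} := by
        constructor
        rintro ⟨Q, _, hl⟩
        have := Q.l_pos
        rw [← h] at hl
        linarith
      have : sumLE E Q₀ S' = 0 := by
        rw [sumLE, tsum_empty]
      nlinarith [Q₀.vol_pos]
  have hbound : ∀ Q, Q ∈ DE E Q₀ → Q.l ≤ S' →
      (2 * S') ^ (-α) * Q.vol ≤ ∫ x in Q.carrier, w x := by
    intro Q hQ hl
    have hptwise : ∀ x ∈ Q.carrier, (2 * S') ^ (-α) ≤ w x := by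
      intro x hx
      have hxE : x ∉ E := by
        intro hxE
        have hQE := hQ.2.1
        rw [Set.eq_empty_iff_forall_notMem] at hQE
        exact hQE x ⟨hx, hxE⟩
      have hd0 : 0 < Metric.infDist x E := (hE.notMem_iff_infDist_pos hne).mp hxE
      have hd2 : Metric.infDist x E ≤ 2 * S' := by
        have := DE.dist_le hQ hQ₀ hx
        linarith [Q.l_pos]
      exact Real.rpow_le_rpow_of_nonpos hd0 hd2 (by linarith)
    have hint : IntegrableOn w Q.carrier := (Cube.integrableOn_carrier hloc Q₀).mono_set
      (DE.subset hQ)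
    calc (2 * S') ^ (-α) * Q.vol = ∫ _ in Q.carrier, (2 * S') ^ (-α) := by
          rw [setIntegral_const, measureReal_def, Cube.volume_carrier, ENNReal.toReal_ofReal Q.vol_pos.le,
            smul_eq_mul, mul_comm]
      _ ≤ ∫ x in Q.carrier, w x := by
          apply setIntegral_mono_on _ hint Q.measurable hptwise
          exact integrableOn_const (by rw [Cube.volume_carrier]; exact
            ENNReal.ofReal_ne_top)
  have hkey := DE.integral_lower (fun Q => Q.l ≤ S') (Cube.integrableOn_carrier hloc Q₀)
    (fun x => Real.rpow_nonneg Metric.infDist_nonneg _)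
    (Real.rpow_nonneg (by linarith) _) hbound
  have hc0 : (0:ℝ) ≤ (2 * S') ^ (-α) := Real.rpow_nonneg (by linarith) _
  have h1 : (2 * S') ^ (-α) * (t * Q₀.vol) ≤ ∫ x in Q₀.carrier, w x := by
    calc (2 * S') ^ (-α) * (t * Q₀.vol) ≤ (2 * S') ^ (-α) * sumLE E Q₀ S' :=
          mul_le_mul_of_nonneg_left hSsum hc0
      _ ≤ ∫ x in Q₀.carrier, w x := hkey
  rw [le_div_iff₀ Q₀.vol_pos]
  calc (2 * S') ^ (-α) * t * Q₀.vol = (2 * S') ^ (-α) * (t * Q₀.vol) := by ring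
    _ ≤ _ := h1

/-- Lower bound for the integral of `dist^{β}` over a large-cubes subfamily. -/
lemma claimL (hne : E.Nonempty) {β : ℝ} (hβ : 0 < β)
    {t L' : ℝ} (ht : 0 < t) (hL0 : 0 ≤ L') (hLsum : t * Q₀.vol ≤ sumGE E Q₀ L') :
    (L' / 4) ^ β * (t / 2 ^ n) ≤ (∫ x in Q₀.carrier, Metric.infDist x E ^ β) / Q₀.vol := by
  set g : (Fin n → ℝ) → ℝ := fun x => Metric.infDist x E ^ β with hg
  have hgc : Continuous g := (Metric.continuous_infDist_pt E).rpow_const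
    (fun x => Or.inr hβ.le)
  have hint : IntegrableOn g Q₀.carrier :=
    (hgc.continuousOn.integrableOn_compact isCompact_Icc).mono_set Q₀.carrier_subset_Icc
  have hbound : ∀ Q, Q ∈ DE E Q₀ → L' ≤ Q.l →
      (L' / 4) ^ β / 2 ^ n * Q.vol ≤ ∫ x in Q.carrier, g x := by
    intro Q hQ hl
    have hlp := Q.l_pos
    set M : Set (Fin n → ℝ) :=
      Set.pi Set.univ (fun i => Set.Icc (Q.a i + Q.l / 4) (Q.a i + 3 * Q.l / 4)) with hM
    have hMmeas : MeasurableSet M := MeasurableSet.univ_pi fun i => measurableSet_Icc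
    have hMsub : M ⊆ Q.carrier := by
      intro x hx i
      have h1 := (hx i (Set.mem_univ i)).1
      have h2 := (hx i (Set.mem_univ i)).2
      constructor <;> [linarith; linarith]
    have hMvol : volume M = ENNReal.ofReal ((Q.l / 2) ^ n) := by
      rw [hM, volume_pi_pi]
      have : ∀ i : Fin n, volume (Set.Icc (Q.a i + Q.l / 4) (Q.a i + 3 * Q.l / 4))
          = ENNReal.ofReal (Q.l / 2) := by
        intro i
        rw [Real.volume_Icc]
        congr 1
        ring
      simp only [this]
      rw [Finset.prod_const, ← ENNReal.ofReal_pow (by linarith)]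
      simp
    have hptwise : ∀ x ∈ M, (L' / 4) ^ β ≤ g x := by
      intro x hx
      have hmid : Q.l / 4 ≤ Metric.infDist x E := by
        apply middle_dist hQ.2.1 hne
        intro i
        exact ⟨(hx i (Set.mem_univ i)).1, (hx i (Set.mem_univ i)).2⟩
      have : L' / 4 ≤ Metric.infDist x E := by linarith
      exact Real.rpow_le_rpow (by linarith) this hβ.le
    have hintQ : IntegrableOn g Q.carrier :=
      (hgc.continuousOn.integrableOn_compact isCompact_Icc).mono_set Q.carrier_subset_Icc
    calc (L' / 4) ^ β / 2 ^ n * Q.vol = (L' / 4) ^ β * (Q.l / 2) ^ n := by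
          rw [Cube.vol, div_pow]
          ring
      _ = ∫ _ in M, (L' / 4) ^ β := by
          rw [setIntegral_const, measureReal_def, hMvol, ENNReal.toReal_ofReal (by positivity), smul_eq_mul,
            mul_comm]
      _ ≤ ∫ x in M, g x := by
          apply setIntegral_mono_on _ (hintQ.mono_set hMsub) hMmeas hptwise
          exact integrableOn_const (by rw [hMvol]; exact ENNReal.ofReal_ne_top)
      _ ≤ ∫ x in Q.carrier, g x := by
          apply setIntegral_mono_set hintQ
          · exact Filter.Eventually.of_forall fun x => Real.rpow_nonneg Metric.infDist_nonneg _
          · exact hMsub.eventuallyLE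
  have hc0 : (0:ℝ) ≤ (L' / 4) ^ β / 2 ^ n := by positivity
  have hkey := DE.integral_lower (fun Q => L' ≤ Q.l) hint
    (fun x => Real.rpow_nonneg Metric.infDist_nonneg _) hc0 hbound
  have h1 : (L' / 4) ^ β / 2 ^ n * (t * Q₀.vol) ≤ ∫ x in Q₀.carrier, g x :=
    le_trans (mul_le_mul_of_nonneg_left hLsum hc0) hkey
  rw [le_div_iff₀ Q₀.vol_pos]
  calc (L' / 4) ^ β * (t / 2 ^ n) * Q₀.vol = (L' / 4) ^ β / 2 ^ n * (t * Q₀.vol) := by ring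
    _ ≤ _ := h1

end Aux5
/-- If `dist(·,E)^{-α} ∈ A_p` with `α > 0`, `1 < p < ∞`, then with `σ = p/α` there is
`C₀ > 0` with `𝓛_{Q₀}(t) ≤ (C₀/t^σ) 𝓢_{Q₀}(t)` for all cubes `Q₀` meeting `E` and
all `t ∈ (0,1)`. -/
theorem stmt11 {n : ℕ} (E : Set (Fin n → ℝ)) (hE : IsClosed E) (hne : E.Nonempty)
    (α p : ℝ) (hα : 0 < α) (hp : 1 < p)
    (h : IsAp p (fun x => Metric.infDist x E ^ (-α))) :
    ∃ C₀ : ℝ, 0 < C₀ ∧ ∀ Q₀ : Cube n, (Q₀.carrier ∩ E).Nonempty →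
      ∀ t ∈ Set.Ioo (0 : ℝ) 1,
        Lfun E Q₀ t ≤ C₀ / t ^ (p / α) * Sfun E Q₀ t := by
  obtain ⟨hpos, hloc, C, hC, hAp⟩ := h
  have hp1 : (0:ℝ) < p - 1 := by linarith
  set β : ℝ := α / (p - 1) with hβdef
  have hβ : 0 < β := div_pos hα hp1
  set K : ℝ := C * 8 ^ α * ((2:ℝ) ^ n) ^ (p - 1) with hK
  have hKpos : 0 < K := by
    apply mul_pos (mul_pos hC (Real.rpow_pos_of_pos (by norm_num) _))
    exact Real.rpow_pos_of_pos (by positivity) _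
  refine ⟨K ^ (1 / α), Real.rpow_pos_of_pos hKpos _, ?_⟩
  intro Q₀ hQ₀ t ⟨ht0, ht1⟩
  have htp : (0:ℝ) < t ^ (p / α) := Real.rpow_pos_of_pos ht0 _
  have hC₀div : (0:ℝ) < K ^ (1 / α) / t ^ (p / α) := by positivity
  -- rewrite the second weight
  have hfun : ∀ x : Fin n → ℝ,
      (Metric.infDist x E ^ (-α)) ^ (-1 / (p - 1)) = Metric.infDist x E ^ β := by
    intro x
    rw [← Real.rpow_mul Metric.infDist_nonneg]
    congr 1
    rw [hβdef]
    field_simp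
  -- the A_p inequality at Q₀
  have hApQ := hAp Q₀
  rw [if_neg (by linarith : p ≠ 1)] at hApQ
  set A : ℝ := (∫ x in Q₀.carrier, Metric.infDist x E ^ (-α)) / Q₀.vol with hA
  set B : ℝ := (∫ x in Q₀.carrier, Metric.infDist x E ^ β) / Q₀.vol with hB
  have hApQ' : A * B ^ (p - 1) ≤ C := by
    have : (∫ x in Q₀.carrier, (Metric.infDist x E ^ (-α)) ^ (-1 / (p - 1)))
        = ∫ x in Q₀.carrier, Metric.infDist x E ^ β := by
      congr 1
      funext x
      exact hfun x
    rw [hA, hB, ← this]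
    exact hApQ
  have hB0 : 0 ≤ B := by
    apply div_nonneg _ Q₀.vol_pos.le
    exact setIntegral_nonneg Q₀.measurable fun x _ => Real.rpow_nonneg Metric.infDist_nonneg _
  -- key elementwise estimate
  have key : ∀ L' ∈ Lset t Q₀ E, ∀ S' ∈ Sset t Q₀ E,
      L' ≤ K ^ (1 / α) / t ^ (p / α) * S' := by
    intro L' hL' S' hS'
    obtain ⟨hL0, hLsum⟩ := hL'
    obtain ⟨hS0, hSsum⟩ := hS'
    rcases eq_or_lt_of_le hL0 with hL0' | hL0'
    · rw [← hL0']
      positivity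
    -- S' > 0 (as in claimS)
    have hS' : 0 < S' := by
      rcases lt_or_eq_of_le hS0 with h | h
      · exact h
      · exfalso
        have hempty : IsEmpty {Q : Cube n // Q ∈ DE E Q₀ ∧ Q.l ≤ S'} := by
          constructor
          rintro ⟨Q, _, hl⟩
          have := Q.l_pos
          rw [← h] at hl
          linarith
        have : sumLE E Q₀ S' = 0 := by rw [sumLE, tsum_empty]
        nlinarith [Q₀.vol_pos]
    have hSa := claimS hE hne hα hloc hQ₀ ht0 hS0 hSsum
    have hLa := claimL hne hβ ht0 hL0 hLsum
    -- combine with the A_p bound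
    have hbS : (0:ℝ) ≤ (2 * S') ^ (-α) * t :=
      mul_nonneg (Real.rpow_nonneg (by linarith) _) ht0.le
    have hbL : (0:ℝ) ≤ (L' / 4) ^ β * (t / 2 ^ n) :=
      mul_nonneg (Real.rpow_nonneg (by linarith) _) (by positivity)
    have hmono : ((L' / 4) ^ β * (t / 2 ^ n)) ^ (p - 1) ≤ B ^ (p - 1) :=
      Real.rpow_le_rpow hbL hLa hp1.le
    have hcomb : ((2 * S') ^ (-α) * t) * ((L' / 4) ^ β * (t / 2 ^ n)) ^ (p - 1) ≤ C := by
      calc ((2 * S') ^ (-α) * t) * ((L' / 4) ^ β * (t / 2 ^ n)) ^ (p - 1)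
          ≤ A * B ^ (p - 1) := by
            apply mul_le_mul hSa hmono (Real.rpow_nonneg hbL _) (le_trans hbS hSa)
        _ ≤ C := hApQ'
    -- expand powers
    have hLexp : ((L' / 4) ^ β) ^ (p - 1) = (L' / 4) ^ α := by
      rw [← Real.rpow_mul (by linarith)]
      congr 1
      rw [hβdef]
      field_simp
    have hexp : ((L' / 4) ^ β * (t / 2 ^ n)) ^ (p - 1)
        = (L' / 4) ^ α * (t / 2 ^ n) ^ (p - 1) := by
      rw [Real.mul_rpow (Real.rpow_nonneg (by linarith) _) (by positivity), hLexp]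
    rw [hexp] at hcomb
    -- final algebra: L'^α ≤ K * S'^α / t^p
    have hmain : L' ^ α ≤ K * S' ^ α / t ^ p := by
      have h2S : (2 * S') ^ (-α) = (2 ^ α * S' ^ α)⁻¹ := by
        rw [Real.rpow_neg (by linarith), Real.mul_rpow (by norm_num) hS0]
      have hL4 : (L' / 4) ^ α = L' ^ α / 4 ^ α :=
        Real.div_rpow hL0 (by norm_num : (0:ℝ) ≤ 4) α
      have ht2 : (t / 2 ^ n) ^ (p - 1) = t ^ (p - 1) / ((2:ℝ) ^ n) ^ (p - 1) :=
        Real.div_rpow ht0.le (by positivity : (0:ℝ) ≤ (2:ℝ) ^ n) (p - 1)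
      have htp2 : t ^ p = t * t ^ (p - 1) := by
        have h := Real.rpow_add ht0 1 (p - 1)
        rw [Real.rpow_one] at h
        rw [show (1:ℝ) + (p - 1) = p by ring] at h
        exact h
      have h8 : (8:ℝ) ^ α = 2 ^ α * 4 ^ α := by
        rw [show (8:ℝ) = 2 * 4 by norm_num, Real.mul_rpow (by norm_num) (by norm_num)]
      rw [h2S, hL4, ht2] at hcomb
      have hP2 : (0:ℝ) < 2 ^ α := Real.rpow_pos_of_pos (by norm_num) _
      have hP4 : (0:ℝ) < 4 ^ α := Real.rpow_pos_of_pos (by norm_num) _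
      have hPN : (0:ℝ) < ((2:ℝ) ^ n) ^ (p - 1) := Real.rpow_pos_of_pos (by positivity) _
      have hPS : (0:ℝ) < S' ^ α := Real.rpow_pos_of_pos hS' _
      have hPT : (0:ℝ) < t ^ (p - 1) := Real.rpow_pos_of_pos ht0 _
      rw [le_div_iff₀ (Real.rpow_pos_of_pos ht0 p), htp2, hK, h8]
      calc L' ^ α * (t * t ^ (p - 1))
          = ((2 ^ α * S' ^ α)⁻¹ * t * (L' ^ α / 4 ^ α * (t ^ (p - 1) / ((2:ℝ) ^ n) ^ (p - 1))))
            * (2 ^ α * S' ^ α * 4 ^ α * ((2:ℝ) ^ n) ^ (p - 1)) := by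
            field_simp
        _ ≤ C * (2 ^ α * S' ^ α * 4 ^ α * ((2:ℝ) ^ n) ^ (p - 1)) := by
            apply mul_le_mul_of_nonneg_right hcomb
            positivity
        _ = C * (2 ^ α * 4 ^ α) * ((2:ℝ) ^ n) ^ (p - 1) * S' ^ α := by ring
    -- take α-th roots
    have hroot : L' ≤ K ^ (1 / α) / t ^ (p / α) * S' := by
      have h1 : L' = (L' ^ α) ^ (1 / α) := by
        rw [← Real.rpow_mul hL0, mul_one_div, div_self hα.ne', Real.rpow_one]
      have h2 : (L' ^ α) ^ (1 / α) ≤ (K * S' ^ α / t ^ p) ^ (1 / α) :=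
        Real.rpow_le_rpow (Real.rpow_nonneg hL0 _) hmain (by positivity)
      have h3 : (K * S' ^ α / t ^ p) ^ (1 / α)
          = K ^ (1 / α) / t ^ (p / α) * S' := by
        rw [Real.div_rpow (mul_nonneg hKpos.le (Real.rpow_nonneg hS0 _))
          (Real.rpow_nonneg ht0.le _),
          Real.mul_rpow hKpos.le (Real.rpow_nonneg hS0 _),
          ← Real.rpow_mul hS0, mul_one_div, div_self hα.ne', Real.rpow_one,
          ← Real.rpow_mul ht0.le, mul_one_div]
        ring
      rw [h1]
      rw [h3] at h2
      exact h2
    exact hroot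
  -- assemble
  have hSinf_nonneg : 0 ≤ Sfun E Q₀ t := by
    rcases Set.eq_empty_or_nonempty (Sset t Q₀ E) with hSe | hSne
    · rw [Sfun, hSe, Real.sInf_empty]
    · exact le_csInf hSne fun S' hS' => hS'.1
  rcases Set.eq_empty_or_nonempty (Lset t Q₀ E) with hLe | hLne
  · rw [Lfun, hLe, Real.sSup_empty]
    exact mul_nonneg hC₀div.le hSinf_nonneg
  · -- Sset is nonempty : Q₀.l works
    obtain ⟨L₁, hL₁⟩ := hLne
    have hSne : (Sset t Q₀ E).Nonempty := by
      refine ⟨Q₀.l, Q₀.l_pos.le, ?_⟩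
      calc t * Q₀.vol ≤ sumGE E Q₀ L₁ := hL₁.2
        _ ≤ sumLE E Q₀ Q₀.l := DE.tsum_mono fun Q hQ _ => DE.l_le hQ
    apply csSup_le ⟨L₁, hL₁⟩
    intro L' hL'
    have hdiv : L' / (K ^ (1 / α) / t ^ (p / α)) ≤ sInf (Sset t Q₀ E) := by
      apply le_csInf hSne
      intro S' hS'
      rw [div_le_iff₀ hC₀div]
      rw [mul_comm]
      exact key L' hL' S' hS'
    rw [div_le_iff₀ hC₀div] at hdiv
    rw [Sfun, mul_comm]
    exact hdiv
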